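/- Let K be an algebraically closed field of characteristic zero, L a finite-dimensional semisimple Lie algebra over K with nondegenerate Killing form, and H a splitting Cartan subalgebra of L. Let α be a root with coroot h_α, and let e ∈ L_α, f ∈ L_{−α} be such that (h_α, e, f) is an sl₂-triple. Let M be a finite-dimensional L-module on which e and f act nilpotently. Then for every linear functional λ on H, the weight spaces M_λ and M_{λ − λ(h_α)α} have the same dimension. In particular, the set of weights of M is invariant under the Weyl reflection λ ↦ λ − λ(h_α)α. -/

import Mathlib

set_option maxHeartbeats 1000000

section ExpNilAux

set_option linter.unusedSectionVars false

variable {K A : Type*} [Field K] [CharZero K] [Ring A] [Algebra K A]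

/-- Truncated exponential of a nilpotent element. -/
noncomputable def expNil (K : Type*) [Field K] {A : Type*} [Ring A] [Algebra K A]
    (n : ℕ) (a : A) : A :=
  ∑ i ∈ Finset.range n, ((i.factorial : K)⁻¹) • a ^ i

lemma pow_mul_expand (a T d1 d2 : A)
    (h1 : a * T = T * a + d1) (h2 : a * d1 = d1 * a + d2) (h3 : a * d2 = d2 * a) :
    ∀ i : ℕ, a ^ i * T = T * a ^ i + (i.choose 1 : K) • (d1 * a ^ (i - 1))
      + (i.choose 2 : K) • (d2 * a ^ (i - 2)) := by
  have key : ∀ i : ℕ, a ^ (i + 2) * T = T * a ^ (i + 2)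
      + ((i + 2).choose 1 : K) • (d1 * a ^ (i + 1))
      + ((i + 2).choose 2 : K) • (d2 * a ^ i) := by
    intro i
    induction i with
    | zero =>
      have c1 : ((0 + 2).choose 1 : K) = 2 := by norm_num
      have c2 : ((0 + 2).choose 2 : K) = 1 := by norm_num
      rw [c1, c2]
      calc a ^ (0 + 2) * T = a * (a * T) := by rw [zero_add, sq, mul_assoc]
        _ = a * (T * a) + (d1 * a + d2) := by rw [h1, mul_add, h2]
        _ = (T * a + d1) * a + (d1 * a + d2) := by rw [← mul_assoc, h1]
        _ = T * a ^ (0 + 2) + (2 : K) • (d1 * a ^ (0 + 1)) + (1 : K) • (d2 * a ^ 0) := by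
            simp only [zero_add, pow_one, pow_zero, mul_one, sq, add_mul, mul_assoc]
            module
    | succ i ih =>
      have c1 : (((i + 1) + 2).choose 1 : K) = ((i + 2).choose 1 : K) + 1 := by
        simp [Nat.choose_one_right]; push_cast; ring
      have c2 : (((i + 1) + 2).choose 2 : K) = ((i + 2).choose 2 : K) + ((i + 2).choose 1 : K) := by
        have : (i + 3).choose 2 = (i + 2).choose 1 + (i + 2).choose 2 := Nat.choose_succ_succ _ _
        rw [show i + 1 + 2 = i + 3 from rfl, this]; push_cast; ring
      rw [c1, c2]
      calc a ^ (i + 1 + 2) * T = a * (a ^ (i + 2) * T) := by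
            rw [show i + 1 + 2 = (i + 2) + 1 from rfl, pow_succ', mul_assoc]
        _ = a * (T * a ^ (i + 2)) + ((i + 2).choose 1 : K) • (a * (d1 * a ^ (i + 1)))
              + ((i + 2).choose 2 : K) • (a * (d2 * a ^ i)) := by
            rw [ih]; simp only [mul_add, mul_smul_comm]
        _ = (T * a + d1) * a ^ (i + 2) + ((i + 2).choose 1 : K) • ((d1 * a + d2) * a ^ (i + 1))
              + ((i + 2).choose 2 : K) • ((d2 * a) * a ^ i) := by
            rw [← mul_assoc, ← mul_assoc, ← mul_assoc, h1, h2, h3]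
        _ = T * a ^ (i + 1 + 2) + (((i + 2).choose 1 : K) + 1) • (d1 * a ^ (i + 1 + 1))
              + (((i + 2).choose 2 : K) + ((i + 2).choose 1 : K)) • (d2 * a ^ (i + 1)) := by
            simp only [add_mul, mul_assoc, ← pow_succ']
            rw [show i + 1 + 2 = (i + 2) + 1 from rfl, show i + 1 + 1 = (i + 1) + 1 from rfl,
              pow_succ', pow_succ', pow_succ' a i]
            simp only [← mul_assoc]
            module
  rintro (_ | _ | i)
  · simp
  · simpa using h1
  · have := key i; norm_num [show i + 1 + 1 = i + 2 from rfl] at this ⊢; convert this using 2 <;> push_cast <;> ring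


lemma coeff1 (i : ℕ) : (((i + 1).factorial : K))⁻¹ * ((i + 1).choose 1 : K)
    = ((i.factorial : K))⁻¹ := by
  have h0 : ((i.factorial : K)) ≠ 0 := Nat.cast_ne_zero.mpr i.factorial_ne_zero
  have h1 : ((i : K) + 1) ≠ 0 := by
    have := Nat.cast_ne_zero (R := K).mpr (Nat.succ_ne_zero i)
    push_cast at this; exact this
  rw [Nat.choose_one_right, Nat.factorial_succ]
  push_cast
  rw [mul_inv]
  field_simp

lemma coeff2 (i : ℕ) : (((i + 2).factorial : K))⁻¹ * ((i + 2).choose 2 : K)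
    = (2 : K)⁻¹ * ((i.factorial : K))⁻¹ := by
  have h0 : ((i.factorial : K)) ≠ 0 := Nat.cast_ne_zero.mpr i.factorial_ne_zero
  have h1 : (((i + 2).factorial : K)) ≠ 0 := Nat.cast_ne_zero.mpr (i + 2).factorial_ne_zero
  have key : (i + 2).choose 2 * (Nat.factorial 2) * i.factorial = (i + 2).factorial := by
    simpa using Nat.choose_mul_factorial_mul_factorial (show 2 ≤ i + 2 by omega)
  have keyK : ((i + 2).choose 2 : K) * 2 * (i.factorial : K) = ((i + 2).factorial : K) := by
    exact_mod_cast congrArg (Nat.cast : ℕ → K) key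
  field_simp
  linear_combination keyK


lemma isUnit_expNil (m : ℕ) (a : A) (ha : IsNilpotent a) : IsUnit (expNil K (m + 1) a) := by
  rw [expNil, Finset.sum_range_succ' _ m]
  simp only [Nat.factorial_zero, Nat.cast_one, inv_one, pow_zero, one_smul]
  refine IsNilpotent.isUnit_add_one ?_
  have hq : (∑ i ∈ Finset.range m, (((i + 1).factorial : K))⁻¹ • a ^ (i + 1))
      = a * ∑ i ∈ Finset.range m, (((i + 1).factorial : K))⁻¹ • a ^ i := by
    rw [Finset.mul_sum]
    exact Finset.sum_congr rfl fun i _ => by rw [mul_smul_comm, ← pow_succ']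
  rw [hq]
  refine Commute.isNilpotent_mul_right ?_ ha
  show _ = _
  rw [Finset.mul_sum, Finset.sum_mul]
  exact Finset.sum_congr rfl fun i _ => by
    rw [mul_smul_comm, smul_mul_assoc, ← pow_succ', ← pow_succ]


lemma expNil_mul (n : ℕ) (a T d1 d2 : A) (ha : a ^ n = 0)
    (h1 : a * T = T * a + d1) (h2 : a * d1 = d1 * a + d2) (h3 : a * d2 = d2 * a) :
    expNil K (n + 2) a * T = (T + d1 + (2 : K)⁻¹ • d2) * expNil K (n + 2) a := by
  have hpow : ∀ m, n ≤ m → a ^ m = 0 := fun m hm => pow_eq_zero_of_le hm ha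
  have key := pow_mul_expand (K := K) a T d1 d2 h1 h2 h3
  have L : expNil K (n + 2) a * T
      = (∑ i ∈ Finset.range (n + 2), (i.factorial : K)⁻¹ • (T * a ^ i))
      + (∑ i ∈ Finset.range (n + 2),
          ((i.factorial : K)⁻¹ * (i.choose 1 : K)) • (d1 * a ^ (i - 1)))
      + (∑ i ∈ Finset.range (n + 2),
          ((i.factorial : K)⁻¹ * (i.choose 2 : K)) • (d2 * a ^ (i - 2))) := by
    rw [expNil, Finset.sum_mul, ← Finset.sum_add_distrib, ← Finset.sum_add_distrib]
    refine Finset.sum_congr rfl fun i _ => ?_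
    rw [smul_mul_assoc, key i, smul_add, smul_add, smul_smul, smul_smul]
  have R : (T + d1 + (2 : K)⁻¹ • d2) * expNil K (n + 2) a
      = (∑ i ∈ Finset.range (n + 2), (i.factorial : K)⁻¹ • (T * a ^ i))
      + (∑ i ∈ Finset.range (n + 2), (i.factorial : K)⁻¹ • (d1 * a ^ i))
      + (∑ i ∈ Finset.range (n + 2), ((2 : K)⁻¹ * (i.factorial : K)⁻¹) • (d2 * a ^ i)) := by
    rw [expNil, add_mul, add_mul, Finset.mul_sum, Finset.mul_sum, smul_mul_assoc, Finset.mul_sum,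
      Finset.smul_sum]
    congr 1
    · congr 1 <;> exact Finset.sum_congr rfl fun i _ => by rw [mul_smul_comm]
    · exact Finset.sum_congr rfl fun i _ => by rw [mul_smul_comm, smul_smul]
  rw [L, R]
  have e2 : n + 2 = (n + 1) + 1 := rfl
  congr 1
  congr 1
  · -- d1 sums
    rw [e2, Finset.sum_range_succ' _ (n + 1), Finset.sum_range_succ _ (n + 1)]
    have t0 : ((Nat.factorial 0 : K)⁻¹ * ((Nat.choose 0 1 : ℕ) : K)) • (d1 * a ^ (0 - 1)) = 0 := by
      norm_num
    have tn : ((((n + 1).factorial : K))⁻¹) • (d1 * a ^ (n + 1)) = 0 := by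
      rw [hpow (n + 1) (by omega), mul_zero, smul_zero]
    rw [t0, tn, add_zero, add_zero]
    refine Finset.sum_congr rfl fun i _ => ?_
    rw [coeff1]
    norm_num
  · -- d2 sums
    rw [e2, Finset.sum_range_succ' _ (n + 1), Finset.sum_range_succ _ (n + 1)]
    have e1 : n + 1 = n + 1 := rfl
    rw [Finset.sum_range_succ' _ n, Finset.sum_range_succ _ n]
    have t0 : ((Nat.factorial 0 : K)⁻¹ * ((Nat.choose 0 2 : ℕ) : K)) • (d2 * a ^ (0 - 2)) = 0 := by
      norm_num
    have t1 : (((Nat.factorial (0 + 1) : K))⁻¹ * (((0 + 1).choose 2 : ℕ) : K))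
        • (d2 * a ^ (0 + 1 - 2)) = 0 := by
      norm_num
    have tn : ((2 : K)⁻¹ * ((n.factorial : K))⁻¹) • (d2 * a ^ n) = 0 := by
      rw [hpow n le_rfl, mul_zero, smul_zero]
    have tn1 : ((2 : K)⁻¹ * (((n + 1).factorial : K))⁻¹) • (d2 * a ^ (n + 1)) = 0 := by
      rw [hpow (n + 1) (by omega), mul_zero, smul_zero]
    rw [t0, t1, tn, tn1, add_zero, add_zero, add_zero, add_zero]
    refine Finset.sum_congr rfl fun i _ => ?_
    rw [show i + 1 + 1 = i + 2 from rfl, coeff2]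
    norm_num


end ExpNilAux



/-- For a linear functional `α` on a Lie subalgebra `H` of `L`, the root space `L_α` is
`{x ∈ L : ⁅h, x⁆ = α h • x for all h ∈ H}`. -/
def rootSpace' {K L : Type*} [Field K] [LieRing L] [LieAlgebra K L]
    (H : LieSubalgebra K L) (α : Module.Dual K H) : Submodule K L :=
  ⨅ h : H, Module.End.eigenspace (LieAlgebra.ad K L (h : L)) (α h)

/-- `α` is a root of `(L, H)` if it is a nonzero functional with nonzero root space. -/
def IsRoot' {K L : Type*} [Field K] [LieRing L] [LieAlgebra K L]
    (H : LieSubalgebra K L) (α : Module.Dual K H) : Prop :=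
  α ≠ 0 ∧ rootSpace' H α ≠ ⊥

/-- For a linear functional `ν` on a Lie subalgebra `H` of `L` and an `L`-module `M`,
the weight space `M_ν` is `{m ∈ M : h • m = ν h • m for all h ∈ H}`. -/
def weightSpace' {K L : Type*} [Field K] [LieRing L] [LieAlgebra K L]
    (H : LieSubalgebra K L) (M : Type*) [AddCommGroup M] [Module K M]
    [LieRingModule L M] [LieModule K L M] (ν : Module.Dual K H) : Submodule K M :=
  ⨅ h : H, Module.End.eigenspace (LieModule.toEnd K L M (h : L)) (ν h)

/-- Let `L` be a finite-dimensional semisimple Lie algebra over an algebraically closed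
field of characteristic zero (nondegenerate Killing form), `H` a (splitting) Cartan
subalgebra, `α` a root with coroot `h_α`, and `e ∈ L_α`, `f ∈ L_{−α}` with `(h_α, e, f)`
an `sl₂`-triple.  Let `M` be a finite-dimensional `L`-module on which `e` and `f` act
nilpotently.  Then for every linear functional `λ` on `H` the weight spaces `M_λ` and
`M_{λ − λ(h_α)α}` have the same dimension; in particular the set of weights of `M` is
invariant under the Weyl reflection `λ ↦ λ − λ(h_α)α`. -/
theorem weight_space_dimensions_weyl_invariant
    {K L : Type*} [Field K] [IsAlgClosed K] [CharZero K]
    [LieRing L] [LieAlgebra K L] [FiniteDimensional K L]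
    [LieAlgebra.IsSemisimple K L] [LieAlgebra.IsKilling K L]
    (H : LieSubalgebra K L) [H.IsCartanSubalgebra]
    (α : Module.Dual K H) (hroot : IsRoot' H α)
    (hα : H) (hcoroot : α hα = 2)
    (e f : L) (hmeme : e ∈ rootSpace' H α) (hmemf : f ∈ rootSpace' H (-α))
    (hef : ⁅e, f⁆ = (hα : L)) (he : e ≠ 0) (hf : f ≠ 0)
    (hhe : ⁅(hα : L), e⁆ = (2 : K) • e) (hhf : ⁅(hα : L), f⁆ = (-2 : K) • f)
    (M : Type*) [AddCommGroup M] [Module K M] [LieRingModule L M] [LieModule K L M]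
    [FiniteDimensional K M]
    (hnile : IsNilpotent (LieModule.toEnd K L M e))
    (hnilf : IsNilpotent (LieModule.toEnd K L M f))
    (lam : Module.Dual K H) :
    Module.finrank K (weightSpace' H M lam) =
        Module.finrank K (weightSpace' H M (lam - lam hα • α)) ∧
      (weightSpace' H M lam ≠ ⊥ → weightSpace' H M (lam - lam hα • α) ≠ ⊥) := by
  classical
  obtain ⟨nE, hnE⟩ := id hnile
  obtain ⟨nF, hnF⟩ := id hnilf
  set T : H → Module.End K M := fun h => LieModule.toEnd K L M (h : L) with hT
  set E : Module.End K M := LieModule.toEnd K L M e with hE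
  set F : Module.End K M := LieModule.toEnd K L M f with hF
  set Hop : Module.End K M := LieModule.toEnd K L M (hα : L) with hHop
  -- base commutator relations in End K M
  have rET : ∀ h : H, E * T h = T h * E + (-(α h)) • E := by
    intro h
    have hL : ⁅(h : L), e⁆ = α h • e := by
      have := (Submodule.mem_iInf _).mp hmeme h
      rw [Module.End.mem_eigenspace_iff] at this
      simpa [LieAlgebra.ad_apply] using this
    have h2 : T h * E - E * T h = (α h) • E := by
      letI : LieRing (Module.End K M) := LieRing.ofAssociativeRing
      simp only [hT, hE]
      rw [← Ring.lie_def, ← LieHom.map_lie, hL, map_smul]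
    rw [neg_smul, ← h2]; abel
  have rFT : ∀ h : H, F * T h = T h * F + (α h) • F := by
    intro h
    have hL : ⁅(h : L), f⁆ = -(α h) • f := by
      have := (Submodule.mem_iInf _).mp hmemf h
      rw [Module.End.mem_eigenspace_iff] at this
      simpa [LieAlgebra.ad_apply] using this
    have h2 : T h * F - F * T h = -(α h) • F := by
      letI : LieRing (Module.End K M) := LieRing.ofAssociativeRing
      simp only [hT, hF]
      rw [← Ring.lie_def, ← LieHom.map_lie, hL, map_smul]
    rw [neg_smul] at h2
    rw [← neg_neg ((α h) • F), ← h2]; abel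
  have rFE : F * E = E * F - Hop := by
    have h2 : E * F - F * E = Hop := by
      letI : LieRing (Module.End K M) := LieRing.ofAssociativeRing
      simp only [hE, hF, hHop]
      rw [← Ring.lie_def, ← LieHom.map_lie, hef]
    rw [← h2]; abel
  have rEH : E * Hop = Hop * E + (-(2 : K)) • E := by
    have h2 : Hop * E - E * Hop = (2 : K) • E := by
      letI : LieRing (Module.End K M) := LieRing.ofAssociativeRing
      simp only [hE, hHop]
      rw [← Ring.lie_def, ← LieHom.map_lie, hhe, map_smul]
    rw [neg_smul, ← h2]; abel
  have rFH : F * Hop = Hop * F + (2 : K) • F := by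
    have h2 : Hop * F - F * Hop = (-2 : K) • F := by
      letI : LieRing (Module.End K M) := LieRing.ofAssociativeRing
      simp only [hF, hHop]
      rw [← Ring.lie_def, ← LieHom.map_lie, hhf, map_smul]
    rw [show ((-2 : K)) = -(2 : K) by norm_num, neg_smul] at h2
    rw [← neg_neg ((2 : K) • F), ← h2]; abel
  -- the exponentials
  set Ee : Module.End K M := expNil K (nE + 2) E with hEe
  set Ef : Module.End K M := expNil K (nF + 2) (-F) with hEf
  set u : Module.End K M := Ee * (Ef * Ee) with hu
  have hnF' : (-F) ^ nF = 0 := by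
    rw [neg_pow, hnF, mul_zero]
  -- conjugation identity
  have conj : ∀ h : H, u * T h = (T h + (-(α h)) • Hop) * u := by
    intro h
    set d1 : Module.End K M := (-(α h)) • E with hd1
    set T₁ : Module.End K M := T h + d1 + (2 : K)⁻¹ • (0 : Module.End K M) with hT₁
    have step1 : Ee * T h = T₁ * Ee := by
      refine expNil_mul nE E (T h) d1 0 hnE ?_ ?_ ?_
      · rw [hd1, neg_smul]
        have := rET h; rw [neg_smul] at this; exact this
      · rw [hd1, mul_smul_comm, smul_mul_assoc, add_zero]
      · simp
    set d12 : Module.End K M := (-(α h)) • F + (-(α h)) • Hop with hd12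
    set d22 : Module.End K M := (2 * α h) • F with hd22
    set T₂ : Module.End K M := T₁ + d12 + (2 : K)⁻¹ • d22 with hT₂
    have step2 : Ef * T₁ = T₂ * Ef := by
      refine expNil_mul nF (-F) T₁ d12 d22 hnF' ?_ ?_ ?_
      · simp only [hT₁, hd1, hd12, mul_add, add_mul, mul_smul_comm, smul_mul_assoc,
          neg_mul, mul_neg, smul_zero, add_zero]
        rw [rFT h, rFE]
        module
      · simp only [hd12, hd22, mul_add, add_mul, mul_smul_comm, smul_mul_assoc,
          neg_mul, mul_neg]
        rw [rFH]
        module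
      · simp only [hd22, mul_smul_comm, smul_mul_assoc, neg_mul, mul_neg, smul_neg]
    set d13 : Module.End K M := (α h) • E with hd13
    set T₃ : Module.End K M := T₂ + d13 + (2 : K)⁻¹ • (0 : Module.End K M) with hT₃
    have step3 : Ee * T₂ = T₃ * Ee := by
      refine expNil_mul nE E T₂ d13 0 hnE ?_ ?_ ?_
      · simp only [hT₂, hT₁, hd1, hd12, hd22, hd13, mul_add, add_mul, mul_smul_comm,
          smul_mul_assoc, smul_zero, add_zero]
        rw [rET h, rEH, rFE]
        module
      · rw [hd13, mul_smul_comm, smul_mul_assoc, add_zero]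
      · simp
    have hT₃' : T₃ = T h + (-(α h)) • Hop := by
      rw [hT₃, hT₂, hT₁, hd1, hd12, hd22, hd13]
      module
    calc u * T h = Ee * (Ef * (Ee * T h)) := by rw [hu, mul_assoc, mul_assoc]
      _ = Ee * ((Ef * T₁) * Ee) := by rw [step1, mul_assoc]
      _ = (Ee * T₂) * (Ef * Ee) := by rw [step2, ← mul_assoc, ← mul_assoc, mul_assoc]
      _ = (T h + (-(α h)) • Hop) * u := by rw [step3, hT₃', hu, mul_assoc]
  -- u is invertible
  have huu : IsUnit u := by
    have h1 : IsUnit Ee := isUnit_expNil (nE + 1) E hnile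
    have h2 : IsUnit Ef := isUnit_expNil (nF + 1) (-F) hnilf.neg
    exact h1.mul (h2.mul h1)
  have huinj : Function.Injective u := ((Module.End.isUnit_iff u).mp huu).injective
  -- u maps weight spaces to reflected weight spaces
  have humem : ∀ (ν : Module.Dual K H) (m : M), m ∈ weightSpace' H M ν →
      u m ∈ weightSpace' H M (ν - ν hα • α) := by
    intro ν m hm
    rw [weightSpace', Submodule.mem_iInf]
    intro h
    rw [Module.End.mem_eigenspace_iff]
    set g : H := h - α h • hα with hg
    have hTg : T g = T h + (-(α h)) • Hop := by
      show LieModule.toEnd K L M ((h - α h • hα : H) : L) = _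
      have hcast : ((h - α h • hα : H) : L) = (h : L) - α h • (hα : L) := by
        push_cast
        ring_nf
      rw [hcast, map_sub, map_smul]
      simp only [hT, hHop]
      module
    have hag : α g = -(α h) := by
      rw [hg, map_sub, map_smul, hcoroot]
      simp only [smul_eq_mul]
      ring
    have hconj := conj g
    have hrepl : T g + (-(α g)) • Hop = T h := by
      rw [hTg, hag]
      module
    rw [hrepl] at hconj
    have hm' : T g m = ν g • m := by
      have := (Submodule.mem_iInf _).mp hm g
      rwa [Module.End.mem_eigenspace_iff] at this
    have hνg : ν g = (ν - ν hα • α) h := by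
      rw [hg, map_sub, map_smul]
      simp only [LinearMap.sub_apply, LinearMap.smul_apply, smul_eq_mul]
      ring
    calc (T h) (u m) = (T h * u) m := rfl
      _ = (u * T g) m := by rw [hconj]
      _ = u (T g m) := rfl
      _ = ν g • u m := by rw [hm', map_smul]
      _ = (ν - ν hα • α) h • u m := by rw [hνg]
  -- the reflected weight reflects back
  set μ : Module.Dual K H := lam - lam hα • α with hμ
  have hback : μ - μ hα • α = lam := by
    have h1 : μ hα = -(lam hα) := by
      rw [hμ]
      simp only [LinearMap.sub_apply, LinearMap.smul_apply, smul_eq_mul, hcoroot]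
      ring
    rw [h1, hμ]
    module
  have map1 : ∀ m : M, m ∈ weightSpace' H M lam → u m ∈ weightSpace' H M μ :=
    fun m hm => humem lam m hm
  have map2 : ∀ m : M, m ∈ weightSpace' H M μ → u m ∈ weightSpace' H M lam := by
    intro m hm
    have := humem μ m hm
    rwa [hback] at this
  constructor
  · have le1 : Module.finrank K (weightSpace' H M lam) ≤ Module.finrank K (weightSpace' H M μ) := by
      refine LinearMap.finrank_le_finrank_of_injective
        (f := (u : M →ₗ[K] M).restrict (p := weightSpace' H M lam) (q := weightSpace' H M μ) map1) ?_
      intro x y hxy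
      have hxy' := Subtype.ext_iff.mp hxy
      rw [LinearMap.restrict_apply, LinearMap.restrict_apply] at hxy'
      exact Subtype.ext (huinj hxy')
    have le2 : Module.finrank K (weightSpace' H M μ) ≤ Module.finrank K (weightSpace' H M lam) := by
      refine LinearMap.finrank_le_finrank_of_injective
        (f := (u : M →ₗ[K] M).restrict (p := weightSpace' H M μ) (q := weightSpace' H M lam) map2) ?_
      intro x y hxy
      have hxy' := Subtype.ext_iff.mp hxy
      rw [LinearMap.restrict_apply, LinearMap.restrict_apply] at hxy'
      exact Subtype.ext (huinj hxy')
    exact le_antisymm le1 le2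
  · intro hne
    obtain ⟨m, hm, hm0⟩ := (Submodule.ne_bot_iff _).mp hne
    rw [Submodule.ne_bot_iff]
    refine ⟨u m, map1 m hm, fun h0 => hm0 (huinj ?_)⟩
    rw [h0, map_zero]
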